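/- For every graph G with n vertices and m edges, every vertex v, and all i, k ≥ 0, there exists a directed acyclic graph D with a distinguished node r such that the unfolding of r in D is isomorphic to the k-redundant neighborhood tree T_{i,k}^v, and D has at most n·(k+1) nodes and at most 2m·(k+1) edges; i.e., a single k-NT admits a linear-size DAG representation of size O(m·(k+1)). -/

import Mathlib

open scoped Classical

universe u v

/-- A rooted labeled (unordered) tree: a root label together with a list of
child subtrees.  The list order is irrelevant for the isomorphism relation. -/
inductive LTree (L : Type u) : Type u
  | node : L → List (LTree L) → LTree L

namespace LTree

variable {L : Type u} {L' C : Type v}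

/-- The label of the root. -/
def label : LTree L → L
  | node a _ => a

/-- The child subtrees of the root. -/
def children : LTree L → List (LTree L)
  | node _ ts => ts

/-- Isomorphism of rooted labeled trees: there is a bijection between the node
sets preserving the root, the parent–child relation and node labels; for our
representation this means equal root labels and children that correspond, up to
a permutation, to pairwise isomorphic subtrees. -/
inductive Iso : LTree L → LTree L → Prop
  | node (a : L) {ts us vs : List (LTree L)} :
      List.Forall₂ Iso ts vs → vs.Perm us → Iso (node a ts) (node a us)

/-- `Embeds t s` : `t` is an induced rooted subtree of `s`, i.e. the nodes of
`t` inject into the nodes of `s` preserving the root, labels and the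
parent–child relation. -/
inductive Embeds : LTree L → LTree L → Prop
  | node (a : L) {ts us vs : List (LTree L)} :
      List.Forall₂ Embeds ts vs → vs.Subperm us → Embeds (node a ts) (node a us)

/-- Number of nodes of a rooted tree. -/
def size : LTree L → ℕ
  | node _ ts => 1 + (ts.attach.map (fun c => size c.1)).sum
decreasing_by simp_wf; have := List.sizeOf_lt_of_mem c.2; omega

/-- Relabel a tree by `f`. -/
def map (f : L → L') : LTree L → LTree L'
  | node a ts => node (f a) (ts.attach.map (fun c => map f c.1))
decreasing_by simp_wf; have := List.sizeOf_lt_of_mem c.2; omega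

/-- Number of nodes of the tree carrying label `x`. -/
def countLabel [DecidableEq L] (x : L) : LTree L → ℕ
  | node a ts => (if a = x then 1 else 0) + (ts.attach.map (fun c => countLabel x c.1)).sum
decreasing_by simp_wf; have := List.sizeOf_lt_of_mem c.2; omega

/-- Number of nodes at depth `d` carrying label `x`. -/
def countAt [DecidableEq L] (x : L) : ℕ → LTree L → ℕ
  | 0, node a _ => if a = x then 1 else 0
  | d+1, node _ ts => (ts.attach.map (fun c => countAt x d c.1)).sum
termination_by _ t => sizeOf t
decreasing_by simp_wf; have := List.sizeOf_lt_of_mem c.2; omega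

/-- `SubtreeAt t d s` : `s` is the subtree of `t` rooted at one of the nodes of
`t` at depth `d`. -/
inductive SubtreeAt : LTree L → ℕ → LTree L → Prop
  | refl (t : LTree L) : SubtreeAt t 0 t
  | step {t c s : LTree L} {d : ℕ} : c ∈ t.children → SubtreeAt c d s → SubtreeAt t (d+1) s

/-- The AHU canonical value: `ahu f t = f (label t) {{ ahu f c | c child of t }}`,
computed bottom-up (a leaf gets `f (label) ∅`). -/
noncomputable def ahu (f : L → Multiset C → C) : LTree L → C
  | node a ts => f a (↑(ts.attach.map (fun c => ahu f c.1)) : Multiset C)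
decreasing_by simp_wf; have := List.sizeOf_lt_of_mem c.2; omega

end LTree

/-- A labeled DAG: finitely many nodes, each with a label and a list of children
(parallel edges are allowed), together with a rank function witnessing
acyclicity (children have strictly smaller rank). -/
structure LDag (L : Type u) where
  size : ℕ
  label : Fin size → L
  children : Fin size → List (Fin size)
  rank : Fin size → ℕ
  rank_lt : ∀ {i j}, j ∈ children i → rank j < rank i

namespace LDag

variable {L : Type u}

/-- The unfolding of a node of a DAG into a rooted labeled tree, obtained by
recursively expanding the node and its children. -/
def unfold (D : LDag L) (p : Fin D.size) : LTree L :=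
  .node (D.label p) ((D.children p).attach.map (fun q => D.unfold q.1))
termination_by D.rank p
decreasing_by exact D.rank_lt q.2

/-- Total number of edges of the DAG (counted with multiplicity). -/
def edgeCount (D : LDag L) : ℕ := ∑ p : Fin D.size, (D.children p).length

end LDag

section Graph

variable {V : Type u} {X : Type v}

/-- The unfolding tree `F_i^v` of height `i` of the vertex `v`, with node labels
given by `μ` (a node representing the graph vertex `x` is labeled `μ x`). -/
noncomputable def SimpleGraph.unfoldingTree (G : SimpleGraph V) [Fintype V] (μ : V → X) :
    ℕ → V → LTree X
  | 0, u => .node (μ u) []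
  | i+1, u => .node (μ u) ((G.neighborFinset u).toList.map (G.unfoldingTree μ i))

/-- Auxiliary recursion for `k`-redundant neighborhood trees: `r` is the root
vertex, `d` is the current depth and `x` the currently represented vertex.  A
neighbor `y` is kept at depth `d + 1` iff `d + 1 ≤ dist r y + k`; since the
minimal depth at which `y` occurs in the unfolding tree rooted at `r` is
`dist r y`, this is exactly the pruning condition
`depth(u) ≤ depth(w) + k` for all nodes `w` with `φ(u) = φ(w)`. -/
noncomputable def SimpleGraph.ntAux (G : SimpleGraph V) [Fintype V] (μ : V → X)
    (r : V) (k : ℕ) : ℕ → ℕ → V → LTree X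
  | 0, _, x => .node (μ x) []
  | i+1, d, x => .node (μ x)
      (((G.neighborFinset x).filter (fun y => d + 1 ≤ G.dist r y + k)).toList.map
        (G.ntAux μ r k i (d+1)))

/-- The `k`-redundant neighborhood tree `T_{i,k}^v` of height `i` of vertex `v`. -/
noncomputable def SimpleGraph.ntTree (G : SimpleGraph V) [Fintype V] (μ : V → X)
    (i k : ℕ) (v : V) : LTree X :=
  G.ntAux μ v k i 0 v

end Graph


section NtDagConstruction

variable {V : Type u} {X : Type v}

lemma LTree.iso_refl {L : Type u} : ∀ (t : LTree L), t.Iso t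
  | .node a ts => .node a ((List.forall₂_same).mpr (fun c hc => LTree.iso_refl c))
      (List.Perm.refl ts)
decreasing_by simp_wf; have := List.sizeOf_lt_of_mem hc; omega

lemma dist_adj_le {G : SimpleGraph V} {v x y : V} (h : G.Adj x y) :
    G.dist v y ≤ G.dist v x + 1 := by
  by_cases hr : G.Reachable v x
  · obtain ⟨w, hw⟩ := hr.exists_walk_length_eq_dist
    calc G.dist v y ≤ (w.concat h).length := SimpleGraph.dist_le _
      _ = G.dist v x + 1 := by rw [SimpleGraph.Walk.length_concat, hw]
  · have hy : ¬ G.Reachable v y := fun h' => hr (h'.trans h.symm.reachable)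
    rw [SimpleGraph.dist_eq_zero_of_not_reachable hy]
    omega

noncomputable def nodeSet (G : SimpleGraph V) [Fintype V] (v : V) (i k : ℕ) :
    Finset (V × ℕ) :=
  (Finset.univ ×ˢ Finset.range (i+1)).filter
    (fun p => G.dist v p.1 ≤ p.2 ∧ p.2 ≤ G.dist v p.1 + k)

lemma mem_nodeSet {G : SimpleGraph V} [Fintype V] {v : V} {i k : ℕ} {p : V × ℕ} :
    p ∈ nodeSet G v i k ↔ p.2 ≤ i ∧ G.dist v p.1 ≤ p.2 ∧ p.2 ≤ G.dist v p.1 + k := by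
  simp [nodeSet, Finset.mem_filter, Finset.mem_product, Nat.lt_succ_iff, and_assoc]

lemma root_mem (G : SimpleGraph V) [Fintype V] (v : V) (i k : ℕ) :
    ((v, 0) : V × ℕ) ∈ nodeSet G v i k := by
  simp [mem_nodeSet, SimpleGraph.dist_self]

lemma child_mem {G : SimpleGraph V} [Fintype V] {v : V} {i k : ℕ} {x y : V} {d : ℕ}
    (hm : (x, d) ∈ nodeSet G v i k) (hd : d < i)
    (hy : y ∈ (G.neighborFinset x).filter (fun y => d + 1 ≤ G.dist v y + k)) :
    ((y, d+1) : V × ℕ) ∈ nodeSet G v i k := by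
  rw [Finset.mem_filter, SimpleGraph.mem_neighborFinset] at hy
  rw [mem_nodeSet] at hm ⊢
  dsimp only at hm ⊢
  have := dist_adj_le (v := v) hy.1
  exact ⟨by omega, by omega, hy.2⟩

/-- The node-indexing equivalence for the DAG. -/
noncomputable def nodeEquiv (G : SimpleGraph V) [Fintype V] (v : V) (i k : ℕ) :
    ↥(nodeSet G v i k) ≃ Fin (nodeSet G v i k).card :=
  (nodeSet G v i k).equivFin

/-- The DAG representing the `k`-redundant neighborhood tree. -/
noncomputable def ntDag (G : SimpleGraph V) [Fintype V] (μ : V → X) (v : V) (i k : ℕ) :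
    LDag X where
  size := (nodeSet G v i k).card
  label p := μ ((nodeEquiv G v i k).symm p).1.1
  children p :=
    if h : ((nodeEquiv G v i k).symm p).1.2 < i then
      ((G.neighborFinset ((nodeEquiv G v i k).symm p).1.1).filter
          (fun y => ((nodeEquiv G v i k).symm p).1.2 + 1 ≤ G.dist v y + k)).toList.attach.map
        (fun q => nodeEquiv G v i k ⟨(q.1, ((nodeEquiv G v i k).symm p).1.2 + 1),
          child_mem ((nodeEquiv G v i k).symm p).2 h (Finset.mem_toList.mp q.2)⟩)
    else []
  rank p := i - ((nodeEquiv G v i k).symm p).1.2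
  rank_lt := by
    intro p j hj
    split at hj
    · rename_i h
      simp only [List.mem_map] at hj
      obtain ⟨q, -, rfl⟩ := hj
      simp only [Equiv.symm_apply_apply]
      omega
    · simp at hj

lemma ntDag_unfold (G : SimpleGraph V) [Fintype V] (μ : V → X) (v : V) (i k : ℕ) :
    ∀ (j : ℕ) (p : Fin (nodeSet G v i k).card),
      i - (((nodeEquiv G v i k).symm p).1.2) = j →
      (ntDag G μ v i k).unfold p =
        G.ntAux μ v k j (((nodeEquiv G v i k).symm p).1.2)
          (((nodeEquiv G v i k).symm p).1.1) := by
  intro j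
  induction j with
  | zero =>
    intro p hj
    have hd : ¬ ((nodeEquiv G v i k).symm p).1.2 < i := by omega
    erw [LDag.unfold, SimpleGraph.ntAux]
    refine congrArg₂ LTree.node rfl ?_
    exact List.map_eq_nil_iff.mpr (List.attach_eq_nil_iff.mpr (dif_neg hd))
  | succ j ih =>
    intro p hj
    have hd : ((nodeEquiv G v i k).symm p).1.2 < i := by omega
    erw [LDag.unfold, SimpleGraph.ntAux, List.attach_map_val]
    simp only [ntDag, dif_pos hd]
    congr 1
    rw [List.map_map]
    rw [List.map_congr_left (g := fun q =>
        G.ntAux μ v k j (((nodeEquiv G v i k).symm p).1.2 + 1) q.1)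
      (fun q hq => by
        have hm := child_mem ((nodeEquiv G v i k).symm p).2 hd (Finset.mem_toList.mp q.2)
        have h1 : ((nodeEquiv G v i k).symm (nodeEquiv G v i k
            ⟨(q.1, ((nodeEquiv G v i k).symm p).1.2 + 1), hm⟩)) =
            ⟨(q.1, ((nodeEquiv G v i k).symm p).1.2 + 1), hm⟩ :=
          Equiv.symm_apply_apply _ _
        have := ih (nodeEquiv G v i k
            ⟨(q.1, ((nodeEquiv G v i k).symm p).1.2 + 1), hm⟩) (by rw [h1]; dsimp only; omega)
        rw [h1] at this
        exact this)]
    exact List.attach_map_val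


lemma ntDag_children_length_le (G : SimpleGraph V) [Fintype V] (μ : V → X) (v : V)
    (i k : ℕ) (p : Fin (nodeSet G v i k).card) :
    ((ntDag G μ v i k).children p).length ≤
      G.degree (((nodeEquiv G v i k).symm p).1.1) := by
  simp only [ntDag]
  split
  · rw [List.length_map, List.length_attach, Finset.length_toList]
    exact le_trans (Finset.card_le_card (Finset.filter_subset _ _))
      (le_of_eq (G.card_neighborFinset_eq_degree _))
  · simp

lemma nodeSet_maps (G : SimpleGraph V) [Fintype V] (v : V) (i k : ℕ) :
    ∀ p ∈ nodeSet G v i k,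
      (p.1, p.2 - G.dist v p.1) ∈ Finset.univ ×ˢ Finset.range (k+1) := by
  intro p hp
  rw [mem_nodeSet] at hp
  simp only [Finset.mem_product, Finset.mem_univ, Finset.mem_range, true_and]
  omega

lemma nodeSet_injOn (G : SimpleGraph V) [Fintype V] (v : V) (i k : ℕ) :
    ∀ p ∈ nodeSet G v i k, ∀ q ∈ nodeSet G v i k,
      (p.1, p.2 - G.dist v p.1) = (q.1, q.2 - G.dist v q.1) → p = q := by
  intro p hp q hq hpq
  rw [mem_nodeSet] at hp hq
  simp only [Prod.mk.injEq] at hpq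
  obtain ⟨h1, h2⟩ := hpq
  rw [h1] at h2 hp
  exact Prod.ext h1 (by omega)

lemma nodeSet_card_le (G : SimpleGraph V) [Fintype V] (v : V) (i k : ℕ) :
    (nodeSet G v i k).card ≤ Fintype.card V * (k + 1) := by
  have := Finset.card_le_card_of_injOn (fun p : V × ℕ => (p.1, p.2 - G.dist v p.1))
    (fun p hp => nodeSet_maps G v i k p hp) (fun p hp q hq h =>
      nodeSet_injOn G v i k p hp q hq h)
  simpa [Finset.card_range] using this


lemma ntDag_fiber_card_le (G : SimpleGraph V) [Fintype V] (v : V) (i k : ℕ) (x : V) :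
    ((nodeSet G v i k).filter (fun p => p.1 = x)).card ≤ k + 1 := by
  have hsub : (nodeSet G v i k).filter (fun p => p.1 = x) ⊆
      ({x} : Finset V) ×ˢ Finset.Icc (G.dist v x) (G.dist v x + k) := by
    intro p hp
    rw [Finset.mem_filter] at hp
    obtain ⟨hp1, hp2⟩ := hp
    rw [mem_nodeSet] at hp1
    rw [Finset.mem_product, Finset.mem_singleton, Finset.mem_Icc, hp2]
    rw [hp2] at hp1
    exact ⟨rfl, hp1.2.1, hp1.2.2⟩
  calc ((nodeSet G v i k).filter (fun p => p.1 = x)).card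
      ≤ (({x} : Finset V) ×ˢ Finset.Icc (G.dist v x) (G.dist v x + k)).card :=
        Finset.card_le_card hsub
    _ = k + 1 := by
        rw [Finset.card_product, Finset.card_singleton, Nat.card_Icc]
        omega

lemma ntDag_edgeCount_le (G : SimpleGraph V) [Fintype V] (μ : V → X) (v : V) (i k : ℕ) :
    (ntDag G μ v i k).edgeCount ≤ 2 * G.edgeFinset.card * (k + 1) := by
  calc (ntDag G μ v i k).edgeCount
      = ∑ p : Fin (nodeSet G v i k).card, ((ntDag G μ v i k).children p).length := rfl
    _ ≤ ∑ p : Fin (nodeSet G v i k).card,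
          G.degree (((nodeEquiv G v i k).symm p).1.1) :=
        Finset.sum_le_sum (fun p _ => ntDag_children_length_le G μ v i k p)
    _ = ∑ a : ↥(nodeSet G v i k),
          G.degree (((nodeEquiv G v i k).symm (nodeEquiv G v i k a)).1.1) :=
        (Equiv.sum_comp (nodeEquiv G v i k) _).symm
    _ = ∑ a : ↥(nodeSet G v i k), G.degree a.1.1 :=
        Finset.sum_congr rfl (fun a _ => by rw [Equiv.symm_apply_apply])
    _ = ∑ p ∈ nodeSet G v i k, G.degree p.1 :=
        Finset.sum_coe_sort (nodeSet G v i k) (fun p => G.degree p.1)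
    _ = ∑ x : V, ∑ p ∈ (nodeSet G v i k).filter (fun p => p.1 = x), G.degree p.1 :=
        (Finset.sum_fiberwise _ _ _).symm
    _ ≤ ∑ x : V, (k + 1) * G.degree x := by
        refine Finset.sum_le_sum (fun x _ => ?_)
        calc ∑ p ∈ (nodeSet G v i k).filter (fun p => p.1 = x), G.degree p.1
            = ∑ p ∈ (nodeSet G v i k).filter (fun p => p.1 = x), G.degree x :=
              Finset.sum_congr rfl (fun p hp => by
                rw [(Finset.mem_filter.mp hp).2])
          _ = ((nodeSet G v i k).filter (fun p => p.1 = x)).card * G.degree x := by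
              rw [Finset.sum_const, smul_eq_mul]
          _ ≤ (k + 1) * G.degree x :=
              Nat.mul_le_mul_right _ (ntDag_fiber_card_le G v i k x)
    _ = (k + 1) * ∑ x : V, G.degree x := by rw [Finset.mul_sum]
    _ = (k + 1) * (2 * G.edgeFinset.card) := by
        rw [G.sum_degrees_eq_twice_card_edges]
    _ = 2 * G.edgeFinset.card * (k + 1) := by ring

end NtDagConstruction

/-- For every graph `G` with `n` vertices and `m` edges, every
vertex `v` and all `i, k ≥ 0`, there is a DAG `D` with a distinguished node `r`
whose unfolding is isomorphic to the `k`-redundant neighborhood tree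
`T_{i,k}^v`, with at most `n·(k+1)` nodes and at most `2m·(k+1)` edges. -/
theorem ntTree_dag_representation {V : Type u} {X : Type v} [Fintype V]
    (G : SimpleGraph V) (μ : V → X) (v : V) (i k : ℕ) :
    ∃ (D : LDag X) (r : Fin D.size),
      LTree.Iso (D.unfold r) (G.ntTree μ i k v) ∧
      D.size ≤ Fintype.card V * (k + 1) ∧
      D.edgeCount ≤ 2 * G.edgeFinset.card * (k + 1) := by
  refine ⟨ntDag G μ v i k, nodeEquiv G v i k ⟨(v, 0), root_mem G v i k⟩, ?_, ?_, ?_⟩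
  · have h1 : (nodeEquiv G v i k).symm (nodeEquiv G v i k ⟨(v, 0), root_mem G v i k⟩) =
        ⟨(v, 0), root_mem G v i k⟩ := Equiv.symm_apply_apply _ _
    have h2 := ntDag_unfold G μ v i k i
      (nodeEquiv G v i k ⟨(v, 0), root_mem G v i k⟩) (by rw [h1]; simp)
    rw [h1] at h2
    dsimp only at h2
    rw [h2]
    exact LTree.iso_refl _
  · exact nodeSet_card_le G v i k
  · exact ntDag_edgeCount_le G μ v i k
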